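/- Let A be a nonzero real n×n matrix, V a real n×k matrix with orthonormal columns (Vᵀ V = I), r ∈ ℝⁿ, e₁ ∈ ℝᵏ, e₂ ∈ ℝⁿ, and η ≥ 0. Set e₁⊥ = (I − V Vᵀ) A V e₁ and e = e₁⊥ + e₂. If ‖e₁‖ ≤ η‖r‖ / (2‖A‖) and ‖e₂‖ ≤ (η/(2+η))·‖r + e₁⊥‖, then ‖e‖ ≤ η·‖r‖. -/

import Mathlib

open Matrix

private lemma inner_symm_eq_dot' {m : ℕ} (x y : Fin m → ℝ) :
    (inner ℝ ((WithLp.equiv 2 (Fin m → ℝ)).symm x) ((WithLp.equiv 2 (Fin m → ℝ)).symm y) : ℝ)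
      = x ⬝ᵥ y := by
  simp [PiLp.inner_apply, dotProduct, mul_comm]

private lemma normsq_symm_eq_dot' {m : ℕ} (x : Fin m → ℝ) :
    ‖(WithLp.equiv 2 (Fin m → ℝ)).symm x‖ ^ 2 = x ⬝ᵥ x := by
  rw [← real_inner_self_eq_norm_sq, inner_symm_eq_dot']

private lemma norm_symm_mulVec_le {m : ℕ} (M : Matrix (Fin m) (Fin m) ℝ) (x : Fin m → ℝ) :
    ‖(WithLp.equiv 2 (Fin m → ℝ)).symm (M.mulVec x)‖
      ≤ ‖Matrix.toEuclideanCLM (𝕜 := ℝ) M‖ * ‖(WithLp.equiv 2 (Fin m → ℝ)).symm x‖ := by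
  have h : (WithLp.equiv 2 (Fin m → ℝ)).symm (M.mulVec x)
      = Matrix.toEuclideanCLM (𝕜 := ℝ) M ((WithLp.equiv 2 (Fin m → ℝ)).symm x) := rfl
  rw [h]
  exact (Matrix.toEuclideanCLM (𝕜 := ℝ) M).le_opNorm _


/-- For a nonzero matrix `A` and `V` with orthonormal columns,
if `‖e₁‖ ≤ η‖r‖/(2‖A‖)` and `‖e₂‖ ≤ (η/(2+η))‖r + e₁⊥‖`, where
`e₁⊥ = (I - V Vᵀ) A V e₁`, then the total error `e = e₁⊥ + e₂` satisfies
`‖e‖ ≤ η‖r‖`.  Here `‖A‖` is the spectral operator norm and vector norms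
are Euclidean. -/
theorem total_error_bound
    {n k : ℕ} (A : Matrix (Fin n) (Fin n) ℝ) (hA : A ≠ 0)
    (V : Matrix (Fin n) (Fin k) ℝ) (hV : Vᵀ * V = 1)
    (r : Fin n → ℝ) (e₁ : Fin k → ℝ) (e₂ : Fin n → ℝ)
    (η : ℝ) (hη : 0 ≤ η)
    (e₁perp : Fin n → ℝ)
    (he₁perp : e₁perp
      = ((1 : Matrix (Fin n) (Fin n) ℝ) - V * Vᵀ).mulVec ((A * V).mulVec e₁))
    (e : Fin n → ℝ) (he : e = e₁perp + e₂)
    (h1 : ‖(WithLp.equiv 2 (Fin k → ℝ)).symm e₁‖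
      ≤ η * ‖(WithLp.equiv 2 (Fin n → ℝ)).symm r‖ /
          (2 * ‖Matrix.toEuclideanCLM (𝕜 := ℝ) A‖))
    (h2 : ‖(WithLp.equiv 2 (Fin n → ℝ)).symm e₂‖
      ≤ (η / (2 + η)) * ‖(WithLp.equiv 2 (Fin n → ℝ)).symm (r + e₁perp)‖) :
    ‖(WithLp.equiv 2 (Fin n → ℝ)).symm e‖
      ≤ η * ‖(WithLp.equiv 2 (Fin n → ℝ)).symm r‖ := by
  set P : Matrix (Fin n) (Fin n) ℝ := (1 : Matrix (Fin n) (Fin n) ℝ) - V * Vᵀ with hP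
  set N : ℝ := ‖Matrix.toEuclideanCLM (𝕜 := ℝ) A‖ with hNdef
  have hN : 0 < N := by
    rw [hNdef, norm_pos_iff]
    intro h
    exact hA ((Matrix.toEuclideanCLM (n := Fin n) (𝕜 := ℝ)).injective (by simpa using h))
  -- V is an isometry
  have hVe : ‖(WithLp.equiv 2 (Fin n → ℝ)).symm (V.mulVec e₁)‖
      = ‖(WithLp.equiv 2 (Fin k → ℝ)).symm e₁‖ := by
    have hsq : ‖(WithLp.equiv 2 (Fin n → ℝ)).symm (V.mulVec e₁)‖ ^ 2
        = ‖(WithLp.equiv 2 (Fin k → ℝ)).symm e₁‖ ^ 2 := by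
      rw [normsq_symm_eq_dot', normsq_symm_eq_dot', Matrix.dotProduct_mulVec,
        ← Matrix.mulVec_transpose, Matrix.mulVec_mulVec, hV, Matrix.one_mulVec]
    rw [← Real.sqrt_sq (norm_nonneg _), ← Real.sqrt_sq
      (norm_nonneg ((WithLp.equiv 2 (Fin k → ℝ)).symm e₁)), hsq]
  -- P is an idempotent symmetric projection
  have hPP : P * P = P := by
    have h1' : V * Vᵀ * (V * Vᵀ) = V * Vᵀ := by
      rw [Matrix.mul_assoc, ← Matrix.mul_assoc Vᵀ V, hV, Matrix.one_mul]
    rw [hP, Matrix.sub_mul, Matrix.mul_sub, Matrix.mul_sub, Matrix.one_mul, Matrix.mul_one, h1']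
    simp
  have hPt : Pᵀ = P := by
    rw [hP]
    simp [Matrix.transpose_sub, Matrix.transpose_mul]
  have hProj : ∀ y : Fin n → ℝ, ‖(WithLp.equiv 2 (Fin n → ℝ)).symm (P.mulVec y)‖
      ≤ ‖(WithLp.equiv 2 (Fin n → ℝ)).symm y‖ := by
    intro y
    have hsq : ‖(WithLp.equiv 2 (Fin n → ℝ)).symm (P.mulVec y)‖ ^ 2
        = (P.mulVec y) ⬝ᵥ y := by
      rw [normsq_symm_eq_dot', Matrix.dotProduct_mulVec, ← Matrix.mulVec_transpose, hPt,
        Matrix.mulVec_mulVec, hPP]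
    have hCS : (P.mulVec y) ⬝ᵥ y
        ≤ ‖(WithLp.equiv 2 (Fin n → ℝ)).symm (P.mulVec y)‖
          * ‖(WithLp.equiv 2 (Fin n → ℝ)).symm y‖ := by
      rw [← inner_symm_eq_dot']
      exact real_inner_le_norm _ _
    nlinarith [norm_nonneg ((WithLp.equiv 2 (Fin n → ℝ)).symm (P.mulVec y)),
      norm_nonneg ((WithLp.equiv 2 (Fin n → ℝ)).symm y)]
  set R : ℝ := ‖(WithLp.equiv 2 (Fin n → ℝ)).symm r‖ with hR
  have hR0 : 0 ≤ R := norm_nonneg _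
  -- bound on e₁perp
  have ha : ‖(WithLp.equiv 2 (Fin n → ℝ)).symm e₁perp‖ ≤ η * R / 2 := by
    have step1 : ‖(WithLp.equiv 2 (Fin n → ℝ)).symm e₁perp‖
        ≤ ‖(WithLp.equiv 2 (Fin n → ℝ)).symm ((A * V).mulVec e₁)‖ := by
      rw [he₁perp]; exact hProj _
    have step2 : ‖(WithLp.equiv 2 (Fin n → ℝ)).symm ((A * V).mulVec e₁)‖
        ≤ N * ‖(WithLp.equiv 2 (Fin k → ℝ)).symm e₁‖ := by
      rw [← Matrix.mulVec_mulVec, ← hVe]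
      exact norm_symm_mulVec_le A (V.mulVec e₁)
    have step3 : N * ‖(WithLp.equiv 2 (Fin k → ℝ)).symm e₁‖ ≤ N * (η * R / (2 * N)) :=
      mul_le_mul_of_nonneg_left h1 hN.le
    have step4 : N * (η * R / (2 * N)) = η * R / 2 := by
      field_simp
    linarith
  set a : ℝ := ‖(WithLp.equiv 2 (Fin n → ℝ)).symm e₁perp‖ with haa
  have ha0 : 0 ≤ a := norm_nonneg _
  have htri : ‖(WithLp.equiv 2 (Fin n → ℝ)).symm e‖
      ≤ a + ‖(WithLp.equiv 2 (Fin n → ℝ)).symm e₂‖ := by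
    rw [he, show (WithLp.equiv 2 (Fin n → ℝ)).symm (e₁perp + e₂) = (WithLp.equiv 2 (Fin n → ℝ)).symm e₁perp + (WithLp.equiv 2 (Fin n → ℝ)).symm e₂ from rfl]
    exact norm_add_le _ _
  have hre : ‖(WithLp.equiv 2 (Fin n → ℝ)).symm (r + e₁perp)‖ ≤ R + a := by
    rw [show (WithLp.equiv 2 (Fin n → ℝ)).symm (r + e₁perp) = (WithLp.equiv 2 (Fin n → ℝ)).symm r + (WithLp.equiv 2 (Fin n → ℝ)).symm e₁perp from rfl]
    exact norm_add_le _ _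
  have hq : 0 ≤ η / (2 + η) := by positivity
  have h2' : ‖(WithLp.equiv 2 (Fin n → ℝ)).symm e₂‖ ≤ η / (2 + η) * (R + a) :=
    h2.trans (mul_le_mul_of_nonneg_left hre hq)
  have hden : (0:ℝ) < 2 + η := by linarith
  have key : η / (2 + η) * (R + a) ≤ η * R / 2 := by
    rw [div_mul_eq_mul_div, div_le_div_iff₀ hden (by norm_num : (0:ℝ) < 2)]
    nlinarith
  linarith
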